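/- arXiv:2102.06835 — 2 statements merged into one kernel-verified Lean document; each statement's English description precedes it below -/
import Mathlib

section
/- (Fefferman's bilinear Carleson–square-function estimate.) Let F, G : ℝⁿ × (0,∞) → ℂ be measurable. Suppose that the measure |F(x,t)|² dx dt / t is a Carleson measure with norm ‖μ‖_c, i.e., for every ball B(y,h) in ℝⁿ one has ∫₀^h ∫_{B(y,h)} |F(x,t)|² dx dt / t ≤ ‖μ‖_c hⁿ. Define the conical square function 𝒜G(x) := (∬_{|x-y|<t} |G(y,t)|² dy dt / t^{n+1})^{1/2}. Then ∬_{ℝⁿ×(0,∞)} |F(y,t)| |G(y,t)| dy dt / t ≤ C(n) ‖μ‖_c^{1/2} ‖𝒜G‖_{L¹(ℝⁿ)}. -/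
open MeasureTheory Metric Set ENNReal
set_option maxHeartbeats 1000000

noncomputable section
namespace FeffAux

variable {n : ℕ}

abbrev E (n : ℕ) := EuclideanSpace ℝ (Fin n)

/-- square function kernel of F at height t -/
def BB (n : ℕ) (F : E n × ℝ → ℂ) (x : E n) (t : ℝ) : ℝ≥0∞ :=
  ∫⁻ y in ball x t, (‖F (y, t)‖₊ : ℝ≥0∞) ^ 2 / ENNReal.ofReal (t ^ (n + 1))

def AA (n : ℕ) (F : E n × ℝ → ℂ) (x : E n) (s : ℝ) : ℝ≥0∞ :=
  ∫⁻ t in Ioc (0 : ℝ) s, BB n F x t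

lemma meas_BB {F : E n × ℝ → ℂ} (hF : Measurable F) :
    Measurable (fun p : E n × ℝ => BB n F p.1 p.2) := by
  have : (fun p : E n × ℝ => BB n F p.1 p.2)
      = fun p : E n × ℝ => ∫⁻ y, (ball p.1 p.2).indicator
          (fun y => (‖F (y, p.2)‖₊ : ℝ≥0∞) ^ 2 / ENNReal.ofReal (p.2 ^ (n + 1))) y := by
    funext p
    rw [BB, lintegral_indicator measurableSet_ball]
  rw [this]
  apply Measurable.lintegral_prod_right'
    (f := fun q : (E n × ℝ) × E n => (ball q.1.1 q.1.2).indicator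
      (fun y => (‖F (y, q.1.2)‖₊ : ℝ≥0∞) ^ 2 / ENNReal.ofReal (q.1.2 ^ (n + 1))) q.2)
  have hset : MeasurableSet {q : (E n × ℝ) × E n | dist q.2 q.1.1 < q.1.2} := by
    apply measurableSet_lt
    · exact (measurable_snd.dist (measurable_fst.comp measurable_fst))
    · exact measurable_snd.comp measurable_fst
  have hfun : Measurable (fun q : (E n × ℝ) × E n =>
      (‖F (q.2, q.1.2)‖₊ : ℝ≥0∞) ^ 2 / ENNReal.ofReal (q.1.2 ^ (n + 1))) := by
    apply Measurable.div
    · exact ((hF.comp (measurable_snd.prodMk (measurable_snd.comp measurable_fst))).nnnorm.coe_nnreal_ennreal).pow_const 2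
    · exact ENNReal.measurable_ofReal.comp ((measurable_snd.comp measurable_fst).pow_const (n+1))
  have : (fun q : (E n × ℝ) × E n => (ball q.1.1 q.1.2).indicator
      (fun y => (‖F (y, q.1.2)‖₊ : ℝ≥0∞) ^ 2 / ENNReal.ofReal (q.1.2 ^ (n + 1))) q.2)
      = fun q => if q ∈ {q : (E n × ℝ) × E n | dist q.2 q.1.1 < q.1.2}
          then (‖F (q.2, q.1.2)‖₊ : ℝ≥0∞) ^ 2 / ENNReal.ofReal (q.1.2 ^ (n + 1)) else 0 := by
    funext q
    by_cases h : dist q.2 q.1.1 < q.1.2 <;>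
      simp [Set.indicator_apply, Metric.mem_ball, h]
  rw [this]
  exact Measurable.ite hset hfun measurable_const

lemma meas_AA {F : E n × ℝ → ℂ} (hF : Measurable F) :
    Measurable (fun p : E n × ℝ => AA n F p.1 p.2) := by
  have h1 : (fun p : E n × ℝ => AA n F p.1 p.2)
      = fun p : E n × ℝ => ∫⁻ t, (Ioc (0:ℝ) p.2).indicator (BB n F p.1) t := by
    funext p
    exact (lintegral_indicator measurableSet_Ioc _).symm
  rw [h1]
  have hset : MeasurableSet {q : (E n × ℝ) × ℝ | 0 < q.2 ∧ q.2 ≤ q.1.2} :=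
    (measurableSet_lt measurable_const measurable_snd).inter
      (measurableSet_le measurable_snd (measurable_fst.snd))
  have key : Measurable (fun q : (E n × ℝ) × ℝ =>
      (Ioc (0:ℝ) q.1.2).indicator (BB n F q.1.1) q.2) := by
    have h2 : (fun q : (E n × ℝ) × ℝ => (Ioc (0:ℝ) q.1.2).indicator (BB n F q.1.1) q.2)
        = ({q : (E n × ℝ) × ℝ | 0 < q.2 ∧ q.2 ≤ q.1.2}).indicator
            (fun q => BB n F q.1.1 q.2) := by
      funext q
      by_cases h : 0 < q.2 ∧ q.2 ≤ q.1.2 <;>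
        simp [Set.indicator_apply, Set.mem_Ioc, h]
    rw [h2]
    exact ((meas_BB hF).comp (measurable_fst.fst.prodMk measurable_snd)).indicator hset
  exact key.lintegral_prod_right'

lemma mono_AA {F : E n × ℝ → ℂ} (x : E n) : Monotone (AA n F x) := by
  intro a b hab
  exact lintegral_mono_set (Ioc_subset_Ioc_right hab)

lemma ball_vol (x : E n) {r : ℝ} (hr : 0 < r) :
    volume (ball x r) = ENNReal.ofReal (r ^ n) * volume (ball (0 : E n) 1) := by
  rw [Measure.addHaar_ball_of_pos volume x hr, finrank_euclideanSpace_fin]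

lemma pow_div_aux {a w : ℝ≥0∞} {t : ℝ} (ht : 0 < t) (n : ℕ) :
    a / ENNReal.ofReal (t ^ (n + 1)) * (ENNReal.ofReal (t ^ n) * w)
      = w * (a / ENNReal.ofReal t) := by
  set oT := ENNReal.ofReal t with hoT
  have h0 : oT ≠ 0 := (ENNReal.ofReal_pos.mpr ht).ne'
  have htop : oT ≠ ∞ := ENNReal.ofReal_ne_top
  rw [ENNReal.ofReal_pow ht.le, ENNReal.ofReal_pow ht.le, pow_succ,
      div_eq_mul_inv, div_eq_mul_inv,
      ENNReal.mul_inv (Or.inl (pow_ne_zero _ h0)) (Or.inl (pow_ne_top htop))]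
  calc a * ((oT ^ n)⁻¹ * oT⁻¹) * (oT ^ n * w)
      = (oT ^ n * (oT ^ n)⁻¹) * (w * (a * oT⁻¹)) := by ring
    _ = w * (a * oT⁻¹) := by
        rw [ENNReal.mul_inv_cancel (pow_ne_zero _ h0) (pow_ne_top htop), one_mul]

lemma chebyshev {F : E n × ℝ → ℂ} (hF : Measurable F) {Cc : ℝ}
    (hCar : ∀ (y : E n) (h : ℝ), 0 < h →
      ∫⁻ t in Ioc (0:ℝ) h, ∫⁻ x in ball y h,
          ((‖F (x, t)‖₊ : ℝ≥0∞)) ^ 2 / ENNReal.ofReal t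
        ≤ ENNReal.ofReal (Cc * h ^ n))
    (y0 : E n) {h : ℝ} (hh : 0 < h) :
    ∫⁻ x in ball y0 h, AA n F x h
      ≤ volume (ball (0 : E n) 1) * ENNReal.ofReal (Cc * (2 * h) ^ n) := by
  set ω := volume (ball (0 : E n) 1) with hω
  have hωtop : ω ≠ ∞ := measure_ball_lt_top.ne
  -- step 1 : swap x and t
  have step1 : ∫⁻ x in ball y0 h, AA n F x h
      = ∫⁻ t in Ioc (0:ℝ) h, ∫⁻ x in ball y0 h, BB n F x t := by
    exact lintegral_lintegral_swap (meas_BB hF).aemeasurable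
  rw [step1]
  -- step 2 : inner bound for fixed t
  have claim2 : ∀ t ∈ Ioc (0:ℝ) h, ∫⁻ x in ball y0 h, BB n F x t
      ≤ ω * ∫⁻ y in ball y0 (2 * h),
          (‖F (y, t)‖₊ : ℝ≥0∞) ^ 2 / ENNReal.ofReal t := by
    rintro t ⟨ht0, hth⟩
    set c : E n → ℝ≥0∞ :=
      fun y => (‖F (y, t)‖₊ : ℝ≥0∞) ^ 2 / ENNReal.ofReal (t ^ (n + 1)) with hc
    have hcmeas : Measurable c := by
      apply Measurable.div
      · exact ((hF.comp (measurable_id.prodMk measurable_const)).nnnorm.coe_nnreal_ennreal).pow_const 2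
      · exact measurable_const
    have e1 : ∀ x : E n, BB n F x t = ∫⁻ y, (ball x t).indicator c y := by
      intro x
      rw [BB, lintegral_indicator measurableSet_ball]
    have swap2 : ∫⁻ x in ball y0 h, BB n F x t
        = ∫⁻ y, ∫⁻ x in ball y0 h, (ball x t).indicator c y := by
      rw [lintegral_congr e1]
      apply lintegral_lintegral_swap
      have hmeq : (fun q : E n × E n => (ball q.1 t).indicator c q.2)
          = ({q : E n × E n | dist q.2 q.1 < t}).indicator (fun q => c q.2) := by
        funext q
        by_cases hq : dist q.2 q.1 < t <;>
          simp [Set.indicator_apply, Metric.mem_ball, hq]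
      have : Measurable (fun q : E n × E n => (ball q.1 t).indicator c q.2) := by
        rw [hmeq]
        exact (hcmeas.comp measurable_snd).indicator
          (measurableSet_lt (measurable_snd.dist measurable_fst) measurable_const)
      exact this.aemeasurable
    rw [swap2]
    have inner_eq : ∀ y : E n, (∫⁻ x in ball y0 h, (ball x t).indicator c y)
        = c y * volume (ball y t ∩ ball y0 h) := by
      intro y
      have : (fun x : E n => (ball x t).indicator c y)
          = (ball y t).indicator (fun _ => c y) := by
        funext x
        by_cases hx : dist x y < t
        · have h1 : y ∈ ball x t := by simpa [Metric.mem_ball, dist_comm] using hx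
          have h2 : x ∈ ball y t := by simpa [Metric.mem_ball] using hx
          simp [Set.indicator_of_mem, h1, h2]
        · have h1 : y ∉ ball x t := by simpa [Metric.mem_ball, dist_comm] using hx
          have h2 : x ∉ ball y t := by simpa [Metric.mem_ball] using hx
          simp [Set.indicator_of_notMem, h1, h2]
      rw [this, lintegral_indicator_const measurableSet_ball,
          Measure.restrict_apply measurableSet_ball]
    rw [lintegral_congr inner_eq]
    have ptbound : ∀ y : E n, c y * volume (ball y t ∩ ball y0 h)
        ≤ (ball y0 (2 * h)).indicator
            (fun y => ω * ((‖F (y, t)‖₊ : ℝ≥0∞) ^ 2 / ENNReal.ofReal t)) y := by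
      intro y
      by_cases hy : y ∈ ball y0 (2 * h)
      · rw [Set.indicator_of_mem hy]
        calc c y * volume (ball y t ∩ ball y0 h)
            ≤ c y * volume (ball y t) :=
              mul_le_mul_right (measure_mono Set.inter_subset_left) _
          _ = c y * (ENNReal.ofReal (t ^ n) * ω) := by rw [ball_vol y ht0]
          _ = ω * ((‖F (y, t)‖₊ : ℝ≥0∞) ^ 2 / ENNReal.ofReal t) := pow_div_aux ht0 n
      · rw [Set.indicator_of_notMem hy]
        have : ball y t ∩ ball y0 h = ∅ := by
          ext x
          simp only [Set.mem_inter_iff, Metric.mem_ball, Set.mem_empty_iff_false, iff_false]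
          rintro ⟨hx1, hx2⟩
          apply hy
          have : dist y y0 < 2 * h := by
            calc dist y y0 ≤ dist y x + dist x y0 := dist_triangle y x y0
              _ < t + h := by rw [dist_comm y x]; exact add_lt_add hx1 hx2
              _ ≤ h + h := by linarith
              _ = 2 * h := by ring
          simpa [Metric.mem_ball] using this
        simp [this]
    calc ∫⁻ y, c y * volume (ball y t ∩ ball y0 h)
        ≤ ∫⁻ y, (ball y0 (2 * h)).indicator
            (fun y => ω * ((‖F (y, t)‖₊ : ℝ≥0∞) ^ 2 / ENNReal.ofReal t)) y :=
          lintegral_mono ptbound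
      _ = ∫⁻ y in ball y0 (2 * h),
            ω * ((‖F (y, t)‖₊ : ℝ≥0∞) ^ 2 / ENNReal.ofReal t) := by
          rw [lintegral_indicator measurableSet_ball]
      _ = ω * ∫⁻ y in ball y0 (2 * h),
            (‖F (y, t)‖₊ : ℝ≥0∞) ^ 2 / ENNReal.ofReal t :=
          lintegral_const_mul' _ _ hωtop
  -- step 3 : combine
  calc ∫⁻ t in Ioc (0:ℝ) h, ∫⁻ x in ball y0 h, BB n F x t
      ≤ ∫⁻ t in Ioc (0:ℝ) h, ω * ∫⁻ y in ball y0 (2 * h),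
          (‖F (y, t)‖₊ : ℝ≥0∞) ^ 2 / ENNReal.ofReal t := by
        apply lintegral_mono_ae
        exact (ae_restrict_iff' measurableSet_Ioc).mpr (ae_of_all _ claim2)
    _ = ω * ∫⁻ t in Ioc (0:ℝ) h, ∫⁻ y in ball y0 (2 * h),
          (‖F (y, t)‖₊ : ℝ≥0∞) ^ 2 / ENNReal.ofReal t :=
        lintegral_const_mul' _ _ hωtop
    _ ≤ ω * ∫⁻ t in Ioc (0:ℝ) (2 * h), ∫⁻ y in ball y0 (2 * h),
          (‖F (y, t)‖₊ : ℝ≥0∞) ^ 2 / ENNReal.ofReal t := by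
        apply mul_le_mul_right
        exact lintegral_mono_set (Ioc_subset_Ioc_right (by linarith))
    _ ≤ ω * ENNReal.ofReal (Cc * (2 * h) ^ n) :=
        mul_le_mul_right (hCar y0 (2 * h) (by linarith)) _

lemma good_density {F : E n × ℝ → ℂ} (hF : Measurable F) {Cc : ℝ} (hCc : 0 ≤ Cc)
    (hCar : ∀ (y : E n) (h : ℝ), 0 < h →
      ∫⁻ t in Ioc (0:ℝ) h, ∫⁻ x in ball y h,
          ((‖F (x, t)‖₊ : ℝ≥0∞)) ^ 2 / ENNReal.ofReal t
        ≤ ENNReal.ofReal (Cc * h ^ n))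
    (y : E n) {t : ℝ} (ht : 0 < t) :
    ENNReal.ofReal (t ^ n) * volume (ball (0 : E n) 1)
      ≤ 2 * volume {x : E n | dist x y < t ∧
          AA n F x t ≤ ENNReal.ofReal (2 ^ (n + 1) * Cc)} := by
  set ω := volume (ball (0 : E n) 1) with hω
  have hωtop : ω ≠ ∞ := measure_ball_lt_top.ne
  set L := ENNReal.ofReal (2 ^ (n + 1) * Cc) with hL
  set a := ENNReal.ofReal (t ^ n) * ω with ha
  have hatop : a ≠ ∞ := ENNReal.mul_ne_top ENNReal.ofReal_ne_top hωtop
  set good := {x : E n | dist x y < t ∧ AA n F x t ≤ L} with hgood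
  set bad := {x : E n | dist x y < t ∧ ¬ AA n F x t ≤ L} with hbad
  have hmeasx : Measurable (fun x : E n => AA n F x t) := by
    have h := (meas_AA hF).comp
      (f := fun x : E n => (x, t)) (measurable_id.prodMk measurable_const)
    simpa [Function.comp_def] using h
  have hcover : ball y t ⊆ good ∪ bad := by
    intro x hx
    rw [Metric.mem_ball] at hx
    by_cases hA : AA n F x t ≤ L
    · exact Or.inl ⟨hx, hA⟩
    · exact Or.inr ⟨hx, hA⟩
  have hbadle : volume bad ≤ a / 2 := by
    rcases eq_or_lt_of_le hCc with hCc0 | hCcpos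
    · -- Cc = 0 : AA vanishes a.e. on the ball
      have hz : ∫⁻ x in ball y t, AA n F x t = 0 := by
        refine le_antisymm ?_ (zero_le)
        have := chebyshev hF hCar y ht
        rwa [← hCc0, zero_mul, ENNReal.ofReal_zero, mul_zero] at this
      have hae : (fun x : E n => AA n F x t) =ᵐ[volume.restrict (ball y t)] 0 :=
        (lintegral_eq_zero_iff hmeasx).mp hz
      have hnull : volume.restrict (ball y t) {x : E n | AA n F x t ≠ 0} = 0 := by
        simpa using ae_iff.mp hae
      have hsub : bad ⊆ {x : E n | AA n F x t ≠ 0} ∩ ball y t := by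
        rintro x ⟨hx1, hx2⟩
        refine ⟨?_, by rwa [Metric.mem_ball]⟩
        intro h0
        exact hx2 (by rw [h0]; exact zero_le)
      have : volume ({x : E n | AA n F x t ≠ 0} ∩ ball y t) = 0 := by
        rw [← Measure.restrict_apply' measurableSet_ball]
        exact hnull
      calc volume bad ≤ 0 := this ▸ measure_mono hsub
        _ ≤ a / 2 := zero_le
    · -- Cc > 0 : Chebyshev
      have hL0 : L ≠ 0 := by
        rw [hL]
        simp only [ne_eq, ENNReal.ofReal_eq_zero, not_le]
        positivity
      have hLtop : L ≠ ∞ := ENNReal.ofReal_ne_top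
      have hcheb : L * volume bad ≤ ω * ENNReal.ofReal (Cc * (2 * t) ^ n) := by
        have h1 : L * volume.restrict (ball y t) {x : E n | L ≤ AA n F x t}
            ≤ ∫⁻ x in ball y t, AA n F x t :=
          mul_meas_ge_le_lintegral₀ hmeasx.aemeasurable L
        have h2 : volume bad ≤ volume.restrict (ball y t) {x : E n | L ≤ AA n F x t} := by
          rw [Measure.restrict_apply' measurableSet_ball]
          apply measure_mono
          rintro x ⟨hx1, hx2⟩
          exact ⟨le_of_lt (not_le.mp hx2), by rwa [Metric.mem_ball]⟩
        calc L * volume bad ≤ L * volume.restrict (ball y t) {x : E n | L ≤ AA n F x t} :=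
              mul_le_mul_right h2 _
          _ ≤ ∫⁻ x in ball y t, AA n F x t := h1
          _ ≤ ω * ENNReal.ofReal (Cc * (2 * t) ^ n) := chebyshev hF hCar y ht
      have hR : ω * ENNReal.ofReal (Cc * (2 * t) ^ n) = L * (ω * ENNReal.ofReal (t ^ n / 2)) := by
        have hreal : Cc * (2 * t) ^ n = (2 ^ (n + 1) * Cc) * (t ^ n / 2) := by
          rw [mul_pow, pow_succ]
          ring
        rw [hreal, ENNReal.ofReal_mul (by positivity)]
        ring
      have hbad2 : volume bad ≤ ω * ENNReal.ofReal (t ^ n / 2) := by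
        have := hcheb
        rw [hR] at this
        exact (ENNReal.mul_le_mul_iff_right hL0 hLtop).mp this
      calc volume bad ≤ ω * ENNReal.ofReal (t ^ n / 2) := hbad2
        _ = a / 2 := by
            rw [ENNReal.ofReal_div_of_pos (by norm_num), ha]
            rw [ENNReal.ofReal_ofNat]
            rw [mul_comm (ENNReal.ofReal (t ^ n)) ω, mul_div_assoc]
  have h1 : a ≤ volume good + a / 2 := by
    calc a = volume (ball y t) := (ball_vol y ht).symm
      _ ≤ volume (good ∪ bad) := measure_mono hcover
      _ ≤ volume good + volume bad := measure_union_le _ _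
      _ ≤ volume good + a / 2 := add_le_add_right hbadle _
  have h2 : a / 2 ≤ volume good := by
    have := tsub_le_iff_right.mpr h1
    rwa [ENNReal.sub_half hatop] at this
  calc a = 2 * (a / 2) := (ENNReal.mul_div_cancel (by norm_num) (by norm_num)).symm
    _ ≤ 2 * volume good := mul_le_mul_right h2 _

lemma downset_lintegral (B : ℝ → ℝ≥0∞) (hB : Measurable B) (S : Set ℝ)
    (hSm : MeasurableSet S) (hS : S ⊆ Ioi 0) (L : ℝ≥0∞)
    (hL : ∀ s ∈ S, ∫⁻ t in Ioc (0:ℝ) s, B t ≤ L) :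
    ∫⁻ t in S, B t ≤ L := by
  -- reduce to bounded pieces
  have key : ∀ k : ℕ, ∫⁻ t in S ∩ Ioc (0:ℝ) k, B t ≤ L := by
    intro k
    set T := S ∩ Ioc (0:ℝ) (k:ℝ) with hT
    rcases T.eq_empty_or_nonempty with hTe | hTne
    · rw [hTe]
      simp
    · have hbdd : BddAbove T := ⟨(k:ℝ), fun t ht => ht.2.2⟩
      set σ := sSup T with hσ
      have hsm : ∀ m : ℕ, ∃ s ∈ T, σ - 1 / (m + 1) < s := by
        intro m
        apply exists_lt_of_lt_csSup hTne
        have : (0:ℝ) < 1 / (m + 1) := by positivity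
        linarith
      choose s hsT hss using hsm
      have cover : T ⊆ {σ} ∪ ⋃ m, Ioc (0:ℝ) (s m) := by
        intro t ht
        rcases eq_or_lt_of_le (le_csSup hbdd ht) with heq | hlt
        · exact Or.inl heq
        · obtain ⟨m, hm⟩ := exists_nat_one_div_lt (sub_pos.mpr hlt)
          refine Or.inr (Set.mem_iUnion.mpr ⟨m, ⟨ht.2.1, ?_⟩⟩)
          have := hss m
          push_cast at hm this ⊢
          linarith
      calc ∫⁻ t in T, B t ≤ ∫⁻ t in {σ} ∪ ⋃ m, Ioc (0:ℝ) (s m), B t :=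
            lintegral_mono_set cover
        _ ≤ (∫⁻ t in {σ}, B t) + ∫⁻ t in ⋃ m, Ioc (0:ℝ) (s m), B t :=
            lintegral_union_le _ _ _
        _ = ∫⁻ t in ⋃ m, Ioc (0:ℝ) (s m), B t := by
            rw [setLIntegral_measure_zero _ _ (measure_singleton σ), zero_add]
        _ ≤ L := by
            set g : ℕ → ℝ → ℝ≥0∞ := fun m => (Ioc (0:ℝ) (s m)).indicator B with hg
            have hgmeas : ∀ m, AEMeasurable (g m) (volume : Measure ℝ) := fun m =>
              (hB.indicator measurableSet_Ioc).aemeasurable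
            have hgdir : Directed (· ≤ ·) g := by
              intro m1 m2
              rcases le_total (s m1) (s m2) with hc | hc
              · exact ⟨m2, fun t => Set.indicator_le_indicator_of_subset
                  (Ioc_subset_Ioc_right hc) (fun _ => zero_le) t, le_refl _⟩
              · exact ⟨m1, le_refl _, fun t => Set.indicator_le_indicator_of_subset
                  (Ioc_subset_Ioc_right hc) (fun _ => zero_le) t⟩
            have hind : ∀ t : ℝ, (⋃ m, Ioc (0:ℝ) (s m)).indicator B t = ⨆ m, g m t := by
              intro t
              by_cases ht : t ∈ ⋃ m, Ioc (0:ℝ) (s m)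
              · rw [Set.indicator_of_mem ht]
                obtain ⟨m, hm⟩ := Set.mem_iUnion.mp ht
                apply le_antisymm
                · exact le_iSup_of_le m (by rw [hg]; simp [Set.indicator_of_mem hm])
                · exact iSup_le fun m => Set.indicator_le_self _ _ t
              · rw [Set.indicator_of_notMem ht]
                symm
                rw [ENNReal.iSup_eq_zero]
                intro m
                have : t ∉ Ioc (0:ℝ) (s m) := fun hc => ht (Set.mem_iUnion.mpr ⟨m, hc⟩)
                simp [hg, Set.indicator_of_notMem this]
            calc ∫⁻ t in ⋃ m, Ioc (0:ℝ) (s m), B t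
                = ∫⁻ t, (⋃ m, Ioc (0:ℝ) (s m)).indicator B t := by
                  rw [lintegral_indicator (MeasurableSet.iUnion fun m => measurableSet_Ioc)]
              _ = ∫⁻ t, ⨆ m, g m t := lintegral_congr hind
              _ = ⨆ m, ∫⁻ t, g m t := lintegral_iSup_directed hgmeas hgdir
              _ ≤ L := by
                  apply iSup_le
                  intro m
                  rw [hg]
                  simp only []
                  rw [lintegral_indicator measurableSet_Ioc]
                  exact hL (s m) (hsT m).1
  -- now pass to the supremum
  set f : ℕ → ℝ → ℝ≥0∞ := fun k => (S ∩ Ioc (0:ℝ) k).indicator B with hf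
  have hfmeas : ∀ k, Measurable (f k) := fun k =>
    hB.indicator (hSm.inter measurableSet_Ioc)
  have hfmono : Monotone f := by
    intro k1 k2 hk t
    apply Set.indicator_le_indicator_of_subset
    · exact Set.inter_subset_inter_right _ (Ioc_subset_Ioc_right (by exact_mod_cast hk))
    · exact fun _ => zero_le
  have hind : ∀ t : ℝ, S.indicator B t = ⨆ k, f k t := by
    intro t
    by_cases ht : t ∈ S
    · rw [Set.indicator_of_mem ht]
      apply le_antisymm
      · have htpos : 0 < t := hS ht
        have hmem : t ∈ S ∩ Ioc (0:ℝ) (⌈t⌉₊ : ℝ) := ⟨ht, htpos, Nat.le_ceil t⟩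
        exact le_iSup_of_le ⌈t⌉₊ (by rw [hf]; simp [Set.indicator_of_mem hmem])
      · exact iSup_le fun k => Set.indicator_le_self _ _ t
    · rw [Set.indicator_of_notMem ht]
      symm
      rw [ENNReal.iSup_eq_zero]
      intro k
      have : t ∉ S ∩ Ioc (0:ℝ) (k:ℝ) := fun hc => ht hc.1
      simp [hf, Set.indicator_of_notMem this]
  calc ∫⁻ t in S, B t = ∫⁻ t, S.indicator B t := by rw [lintegral_indicator hSm]
    _ = ∫⁻ t, ⨆ k, f k t := lintegral_congr hind
    _ = ⨆ k, ∫⁻ t, f k t := lintegral_iSup hfmeas hfmono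
    _ ≤ L := by
        apply iSup_le
        intro k
        rw [hf]
        simp only []
        rw [lintegral_indicator (hSm.inter measurableSet_Ioc)]
        exact key k

lemma half_mul_self (a : ℝ≥0∞) : a ^ (1/2 : ℝ) * a ^ (1/2 : ℝ) = a := by
  rw [← ENNReal.rpow_add_of_nonneg (1/2 : ℝ) (1/2 : ℝ) (by norm_num) (by norm_num)]
  norm_num

lemma sq_rpow (a : ℝ≥0∞) : (a ^ (1/2 : ℝ)) ^ (2 : ℝ) = a := by
  rw [← ENNReal.rpow_mul]
  norm_num

lemma rpow_two' (a : ℝ≥0∞) : a ^ (2 : ℝ) = a ^ (2 : ℕ) := by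
  rw [show (2:ℝ) = ((2:ℕ):ℝ) by norm_num, ENNReal.rpow_natCast]

end FeffAux

open FeffAux in
/-- Fefferman's bilinear Carleson–square-function estimate: if `|F(x,t)|² dx dt / t` is a
Carleson measure with norm `‖μ‖_c`, and `𝒜G` is the conical square function of `G`, then
`∬ |F| |G| dy dt / t ≤ C(n) ‖μ‖_c^{1/2} ‖𝒜G‖_{L¹}`. -/
theorem fefferman_bilinear_carleson
    (n : ℕ) :
    ∃ C > 0, ∀ (F G : EuclideanSpace ℝ (Fin n) × ℝ → ℂ), Measurable F → Measurable G →
      ∀ (Cc : ℝ), 0 ≤ Cc →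
      (∀ (y : EuclideanSpace ℝ (Fin n)) (h : ℝ), 0 < h →
        ∫⁻ t in Ioc (0 : ℝ) h, ∫⁻ x in ball y h,
            ((‖F (x, t)‖₊ : ℝ≥0∞)) ^ 2 / ENNReal.ofReal t
          ≤ ENNReal.ofReal (Cc * h ^ n)) →
      (∫⁻ t in Ioi (0 : ℝ), ∫⁻ y : EuclideanSpace ℝ (Fin n),
          (‖F (y, t)‖₊ : ℝ≥0∞) * (‖G (y, t)‖₊ : ℝ≥0∞) / ENNReal.ofReal t)
        ≤ ENNReal.ofReal (C * Real.sqrt Cc) *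
            ∫⁻ x : EuclideanSpace ℝ (Fin n),
              (∫⁻ t in Ioi (0 : ℝ), ∫⁻ y in ball x t,
                ((‖G (y, t)‖₊ : ℝ≥0∞)) ^ 2 / ENNReal.ofReal (t ^ (n + 1))) ^ (1/2 : ℝ) := by
  classical
  set ωE := volume (ball (0 : E n) 1) with hωE
  have hω0 : ωE ≠ 0 := (measure_ball_pos volume 0 one_pos).ne'
  have hωtop : ωE ≠ ∞ := measure_ball_lt_top.ne
  have hwr : 0 < ωE.toReal := ENNReal.toReal_pos hω0 hωtop
  refine ⟨2 * Real.sqrt (2 ^ (n + 1)) / ωE.toReal, by positivity, ?_⟩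
  intro F G hF hG Cc hCc hCar
  set L := ENNReal.ofReal (2 ^ (n + 1) * Cc) with hLdef
  have hLtop : L ≠ ∞ := ENNReal.ofReal_ne_top
  have hctop : (2 : ℝ≥0∞) * ωE⁻¹ ≠ ∞ :=
    ENNReal.mul_ne_top ENNReal.ofNat_ne_top (ENNReal.inv_ne_top.mpr hω0)
  -- measurability of the stopping functions
  have hAAx : ∀ t : ℝ, Measurable (fun x : E n => AA n F x t) := by
    intro t
    have h := (meas_AA hF).comp
      (f := fun x : E n => (x, t)) (measurable_id.prodMk measurable_const)
    simpa [Function.comp_def] using h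
  -- the good sets and the localized integrand
  set Gd : E n → ℝ → Set (E n) :=
    fun y t => {x : E n | dist x y < t ∧ AA n F x t ≤ L} with hGd
  have hGdm : ∀ (y : E n) (t : ℝ), MeasurableSet (Gd y t) := by
    intro y t
    exact (measurableSet_lt (measurable_id.dist measurable_const) measurable_const).inter
      ((hAAx t) measurableSet_Iic)
  set P : E n → E n → ℝ → ℝ≥0∞ := fun x y t =>
    (Gd y t).indicator (fun _ => (‖F (y, t)‖₊ : ℝ≥0∞) * (‖G (y, t)‖₊ : ℝ≥0∞)
      / ENNReal.ofReal (t ^ (n + 1))) x with hP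
  -- Step 1: pointwise domination by the good-set average
  have step1 : (∫⁻ t in Ioi (0 : ℝ), ∫⁻ y : E n,
        (‖F (y, t)‖₊ : ℝ≥0∞) * (‖G (y, t)‖₊ : ℝ≥0∞) / ENNReal.ofReal t)
      ≤ 2 * ωE⁻¹ * ∫⁻ t in Ioi (0 : ℝ), ∫⁻ y : E n, ∫⁻ x : E n, P x y t := by
    rw [← lintegral_const_mul' _ _ hctop]
    apply lintegral_mono_ae
    refine (ae_restrict_iff' measurableSet_Ioi).mpr (ae_of_all _ ?_)
    intro t ht
    rw [← lintegral_const_mul' _ _ hctop]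
    apply lintegral_mono
    intro y
    have h1 : ∫⁻ x : E n, P x y t
        = (‖F (y, t)‖₊ : ℝ≥0∞) * (‖G (y, t)‖₊ : ℝ≥0∞) / ENNReal.ofReal (t ^ (n + 1))
            * volume (Gd y t) :=
      lintegral_indicator_const (hGdm y t) _
    have h2 := good_density hF hCc hCar y ht
    calc (‖F (y, t)‖₊ : ℝ≥0∞) * (‖G (y, t)‖₊ : ℝ≥0∞) / ENNReal.ofReal t
        = ωE⁻¹ * ((‖F (y, t)‖₊ : ℝ≥0∞) * (‖G (y, t)‖₊ : ℝ≥0∞)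
            / ENNReal.ofReal (t ^ (n + 1)) * (ENNReal.ofReal (t ^ n) * ωE)) := by
          rw [pow_div_aux ht n, ← mul_assoc, ENNReal.inv_mul_cancel hω0 hωtop, one_mul]
      _ ≤ ωE⁻¹ * ((‖F (y, t)‖₊ : ℝ≥0∞) * (‖G (y, t)‖₊ : ℝ≥0∞)
            / ENNReal.ofReal (t ^ (n + 1)) * (2 * volume (Gd y t))) :=
          mul_le_mul_right (mul_le_mul_right h2 _) _
      _ = 2 * ωE⁻¹ * ((‖F (y, t)‖₊ : ℝ≥0∞) * (‖G (y, t)‖₊ : ℝ≥0∞)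
            / ENNReal.ofReal (t ^ (n + 1)) * volume (Gd y t)) := by ring
      _ = 2 * ωE⁻¹ * ∫⁻ x : E n, P x y t := by rw [h1]
  -- joint measurability of P in various orders
  have hAA2 : Measurable (fun r : (ℝ × E n) × E n => AA n F r.1.2 r.1.1) := by
    have h : Measurable ((fun p : E n × ℝ => AA n F p.1 p.2)
        ∘ (fun r : (ℝ × E n) × E n => (r.1.2, r.1.1))) :=
      (meas_AA hF).comp ((measurable_fst.snd).prodMk measurable_fst.fst)
    simpa [Function.comp_def] using h
  -- Step 2a: swap x and y for fixed t
  have step2a : ∀ t : ℝ, (∫⁻ y : E n, ∫⁻ x : E n, P x y t)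
      = ∫⁻ x : E n, ∫⁻ y : E n, P x y t := by
    intro t
    apply lintegral_lintegral_swap
    have hmeq : (fun q : E n × E n => P q.2 q.1 t)
        = ({q : E n × E n | dist q.2 q.1 < t ∧ AA n F q.2 t ≤ L}).indicator
            (fun q => (‖F (q.1, t)‖₊ : ℝ≥0∞) * (‖G (q.1, t)‖₊ : ℝ≥0∞)
              / ENNReal.ofReal (t ^ (n + 1))) := by
      funext q
      by_cases hq : dist q.2 q.1 < t ∧ AA n F q.2 t ≤ L
      · simp only [hP]
        rw [Set.indicator_of_mem (show q.2 ∈ Gd q.1 t from hq),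
          Set.indicator_of_mem
            (show q ∈ {q : E n × E n | dist q.2 q.1 < t ∧ AA n F q.2 t ≤ L} from hq)]
      · simp only [hP]
        rw [Set.indicator_of_notMem (show q.2 ∉ Gd q.1 t from hq),
          Set.indicator_of_notMem
            (show q ∉ {q : E n × E n | dist q.2 q.1 < t ∧ AA n F q.2 t ≤ L} from hq)]
    have hWm : MeasurableSet {q : E n × E n | dist q.2 q.1 < t ∧ AA n F q.2 t ≤ L} := by
      refine (measurableSet_lt (measurable_snd.dist measurable_fst) measurable_const).inter ?_
      exact ((hAAx t).comp measurable_snd) measurableSet_Iic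
    have hfm : Measurable (fun q : E n × E n =>
        (‖F (q.1, t)‖₊ : ℝ≥0∞) * (‖G (q.1, t)‖₊ : ℝ≥0∞) / ENNReal.ofReal (t ^ (n + 1))) := by
      apply Measurable.div
      · exact ((hF.comp (measurable_fst.prodMk measurable_const)).nnnorm.coe_nnreal_ennreal).mul
          ((hG.comp (measurable_fst.prodMk measurable_const)).nnnorm.coe_nnreal_ennreal)
      · exact measurable_const
    have : Measurable (fun q : E n × E n => P q.2 q.1 t) := by
      rw [hmeq]; exact hfm.indicator hWm
    exact this.aemeasurable
  -- Step 2b: swap t and x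
  have hPker : Measurable (fun r : (ℝ × E n) × E n => P r.1.2 r.2 r.1.1) := by
    have hmeq : (fun r : (ℝ × E n) × E n => P r.1.2 r.2 r.1.1)
        = ({r : (ℝ × E n) × E n | dist r.1.2 r.2 < r.1.1 ∧ AA n F r.1.2 r.1.1 ≤ L}).indicator
            (fun r => (‖F (r.2, r.1.1)‖₊ : ℝ≥0∞) * (‖G (r.2, r.1.1)‖₊ : ℝ≥0∞)
              / ENNReal.ofReal (r.1.1 ^ (n + 1))) := by
      funext r
      by_cases hr : dist r.1.2 r.2 < r.1.1 ∧ AA n F r.1.2 r.1.1 ≤ L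
      · simp only [hP]
        rw [Set.indicator_of_mem (show r.1.2 ∈ Gd r.2 r.1.1 from hr),
          Set.indicator_of_mem (show r ∈ {r : (ℝ × E n) × E n |
            dist r.1.2 r.2 < r.1.1 ∧ AA n F r.1.2 r.1.1 ≤ L} from hr)]
      · simp only [hP]
        rw [Set.indicator_of_notMem (show r.1.2 ∉ Gd r.2 r.1.1 from hr),
          Set.indicator_of_notMem (show r ∉ {r : (ℝ × E n) × E n |
            dist r.1.2 r.2 < r.1.1 ∧ AA n F r.1.2 r.1.1 ≤ L} from hr)]
    have hWm : MeasurableSet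
        {r : (ℝ × E n) × E n | dist r.1.2 r.2 < r.1.1 ∧ AA n F r.1.2 r.1.1 ≤ L} := by
      refine (measurableSet_lt (measurable_fst.snd.dist measurable_snd)
        measurable_fst.fst).inter ?_
      exact hAA2 measurableSet_Iic
    have hfm : Measurable (fun r : (ℝ × E n) × E n =>
        (‖F (r.2, r.1.1)‖₊ : ℝ≥0∞) * (‖G (r.2, r.1.1)‖₊ : ℝ≥0∞)
          / ENNReal.ofReal (r.1.1 ^ (n + 1))) := by
      apply Measurable.div
      · exact ((hF.comp (measurable_snd.prodMk measurable_fst.fst)).nnnorm.coe_nnreal_ennreal).mul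
          ((hG.comp (measurable_snd.prodMk measurable_fst.fst)).nnnorm.coe_nnreal_ennreal)
      · exact ENNReal.measurable_ofReal.comp ((measurable_fst.fst).pow_const (n + 1))
    rw [hmeq]; exact hfm.indicator hWm
  have step2b : (∫⁻ t in Ioi (0 : ℝ), ∫⁻ x : E n, ∫⁻ y : E n, P x y t)
      = ∫⁻ x : E n, ∫⁻ t in Ioi (0 : ℝ), ∫⁻ y : E n, P x y t := by
    apply lintegral_lintegral_swap
    exact (hPker.lintegral_prod_right').aemeasurable
  have conj : Real.HolderConjugate 2 2 := Real.HolderConjugate.two_two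
  have hL12top : L ^ (1/2 : ℝ) ≠ ∞ := ENNReal.rpow_ne_top_of_nonneg (by norm_num) hLtop
  -- Step 3: Cauchy-Schwarz in the cone, for each x
  have step3 : ∀ x : E n, (∫⁻ t in Ioi (0 : ℝ), ∫⁻ y : E n, P x y t)
      ≤ L ^ (1/2 : ℝ) * (∫⁻ t in Ioi (0 : ℝ), ∫⁻ y in ball x t,
          ((‖G (y, t)‖₊ : ℝ≥0∞)) ^ 2 / ENNReal.ofReal (t ^ (n + 1))) ^ (1/2 : ℝ) := by
    intro x
    have hAAt : Measurable (fun t : ℝ => AA n F x t) := (mono_AA x).measurable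
    have hBBx : Measurable (BB n F x) := by
      have h : Measurable ((fun p : E n × ℝ => BB n F p.1 p.2) ∘ (fun t : ℝ => (x, t))) :=
        (meas_BB hF).comp (measurable_const.prodMk measurable_id)
      simpa [Function.comp_def] using h
    set ρ := (volume.restrict (Ioi (0:ℝ))).prod (volume : Measure (E n)) with hρ
    set W1 : Set (ℝ × E n) := {q | dist x q.2 < q.1 ∧ AA n F x q.1 ≤ L} with hW1
    set W2 : Set (ℝ × E n) := {q | dist x q.2 < q.1} with hW2
    have hW1m : MeasurableSet W1 :=
      (measurableSet_lt (measurable_const.dist measurable_snd) measurable_fst).inter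
        ((hAAt.comp measurable_fst) measurableSet_Iic)
    have hW2m : MeasurableSet W2 :=
      measurableSet_lt (measurable_const.dist measurable_snd) measurable_fst
    have hσm : Measurable (fun q : ℝ × E n => ((ENNReal.ofReal (q.1 ^ (n+1)))⁻¹) ^ (1/2:ℝ)) :=
      ((ENNReal.measurable_ofReal.comp (measurable_fst.pow_const (n+1))).inv).pow_const _
    set u := W1.indicator (fun q : ℝ × E n =>
      (‖F (q.2, q.1)‖₊ : ℝ≥0∞) * ((ENNReal.ofReal (q.1 ^ (n+1)))⁻¹) ^ (1/2:ℝ)) with hu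
    set v := W2.indicator (fun q : ℝ × E n =>
      (‖G (q.2, q.1)‖₊ : ℝ≥0∞) * ((ENNReal.ofReal (q.1 ^ (n+1)))⁻¹) ^ (1/2:ℝ)) with hv
    have hum : Measurable u :=
      (((hF.comp (measurable_snd.prodMk measurable_fst)).nnnorm.coe_nnreal_ennreal).mul hσm).indicator hW1m
    have hvm : Measurable v :=
      (((hG.comp (measurable_snd.prodMk measurable_fst)).nnnorm.coe_nnreal_ennreal).mul hσm).indicator hW2m
    -- pointwise factorization
    have hPuv : ∀ (t : ℝ) (y : E n), P x y t = u (t, y) * v (t, y) := by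
      intro t y
      by_cases hq : dist x y < t ∧ AA n F x t ≤ L
      · have hq1 : (t, y) ∈ W1 := hq
        have hq2 : (t, y) ∈ W2 := hq.1
        have hxm : x ∈ Gd y t := hq
        simp only [hP, hu, hv]
        rw [Set.indicator_of_mem hxm, Set.indicator_of_mem hq1, Set.indicator_of_mem hq2,
          div_eq_mul_inv]
        have hhalf : (ENNReal.ofReal (t ^ (n+1)))⁻¹
            = ((ENNReal.ofReal (t ^ (n+1)))⁻¹) ^ (1/2:ℝ)
              * ((ENNReal.ofReal (t ^ (n+1)))⁻¹) ^ (1/2:ℝ) := (half_mul_self _).symm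
        conv_lhs => rw [hhalf]
        ring
      · have hq1 : (t, y) ∉ W1 := hq
        have hxm : x ∉ Gd y t := hq
        simp only [hP, hu]
        rw [Set.indicator_of_notMem hxm, Set.indicator_of_notMem hq1, zero_mul]
    -- pass to the product measure
    have htrip : (∫⁻ t in Ioi (0 : ℝ), ∫⁻ y : E n, P x y t) = ∫⁻ q, (u * v) q ∂ρ := by
      rw [lintegral_congr (fun t => lintegral_congr (fun y => hPuv t y))]
      have h := lintegral_lintegral (μ := volume.restrict (Ioi (0:ℝ)))
        (ν := (volume : Measure (E n))) (f := fun t y => u (t, y) * v (t, y))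
        ((hum.mul hvm).aemeasurable)
      rw [h]
      exact lintegral_congr (fun q => by simp)
    -- Cauchy-Schwarz
    have hCS : ∫⁻ q, (u * v) q ∂ρ
        ≤ (∫⁻ q, u q ^ (2:ℝ) ∂ρ) ^ (1/2:ℝ) * (∫⁻ q, v q ^ (2:ℝ) ∂ρ) ^ (1/2:ℝ) :=
      ENNReal.lintegral_mul_le_Lp_mul_Lq ρ conj hum.aemeasurable hvm.aemeasurable
    -- the F-factor is controlled by the stopping time construction
    have claim_u : ∫⁻ q, u q ^ (2:ℝ) ∂ρ ≤ L := by
      have hu2 : ∀ q : ℝ × E n, u q ^ (2:ℝ)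
          = W1.indicator (fun q => (‖F (q.2, q.1)‖₊ : ℝ≥0∞) ^ 2
              / ENNReal.ofReal (q.1 ^ (n + 1))) q := by
        intro q
        by_cases hq : q ∈ W1
        · simp only [hu]
          rw [Set.indicator_of_mem hq, Set.indicator_of_mem hq,
            ENNReal.mul_rpow_of_nonneg _ _ (by norm_num : (0:ℝ) ≤ 2),
            sq_rpow, rpow_two', div_eq_mul_inv]
        · simp only [hu]
          rw [Set.indicator_of_notMem hq, Set.indicator_of_notMem hq,
            ENNReal.zero_rpow_of_pos (by norm_num)]
      have hWf : Measurable (fun q : ℝ × E n => (‖F (q.2, q.1)‖₊ : ℝ≥0∞) ^ 2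
          / ENNReal.ofReal (q.1 ^ (n + 1))) := by
        apply Measurable.div
        · exact ((hF.comp (measurable_snd.prodMk measurable_fst)).nnnorm.coe_nnreal_ennreal).pow_const 2
        · exact ENNReal.measurable_ofReal.comp (measurable_fst.pow_const (n+1))
      rw [lintegral_congr hu2, hρ, lintegral_prod _ (hWf.indicator hW1m).aemeasurable]
      have hinner : ∀ t : ℝ, (∫⁻ y : E n, W1.indicator
            (fun q => (‖F (q.2, q.1)‖₊ : ℝ≥0∞) ^ 2 / ENNReal.ofReal (q.1 ^ (n + 1))) (t, y))
          = ({s : ℝ | AA n F x s ≤ L}).indicator (fun s => BB n F x s) t := by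
        intro t
        by_cases hA : AA n F x t ≤ L
        · rw [Set.indicator_of_mem (show t ∈ {s : ℝ | AA n F x s ≤ L} from hA)]
          have hpt : ∀ y : E n, W1.indicator
              (fun q => (‖F (q.2, q.1)‖₊ : ℝ≥0∞) ^ 2 / ENNReal.ofReal (q.1 ^ (n + 1))) (t, y)
              = (ball x t).indicator
                  (fun y => (‖F (y, t)‖₊ : ℝ≥0∞) ^ 2 / ENNReal.ofReal (t ^ (n + 1))) y := by
            intro y
            by_cases hy : dist x y < t
            · rw [Set.indicator_of_mem (show (t, y) ∈ W1 from ⟨hy, hA⟩),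
                Set.indicator_of_mem (show y ∈ ball x t by rwa [Metric.mem_ball, dist_comm])]
            · rw [Set.indicator_of_notMem (show (t, y) ∉ W1 from fun hc => hy hc.1),
                Set.indicator_of_notMem
                  (show y ∉ ball x t by rwa [Metric.mem_ball, dist_comm])]
          rw [lintegral_congr hpt, lintegral_indicator measurableSet_ball]
          rfl
        · rw [Set.indicator_of_notMem (show t ∉ {s : ℝ | AA n F x s ≤ L} from hA)]
          have hpt : ∀ y : E n, W1.indicator
              (fun q => (‖F (q.2, q.1)‖₊ : ℝ≥0∞) ^ 2 / ENNReal.ofReal (q.1 ^ (n + 1))) (t, y)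
              = 0 := by
            intro y
            exact Set.indicator_of_notMem (fun hc => hA hc.2) _
          rw [lintegral_congr hpt]
          simp
      rw [lintegral_congr hinner]
      have hSAm : MeasurableSet {s : ℝ | AA n F x s ≤ L} := hAAt measurableSet_Iic
      rw [lintegral_indicator hSAm, Measure.restrict_restrict hSAm]
      exact downset_lintegral (BB n F x) hBBx _ (hSAm.inter measurableSet_Ioi)
        Set.inter_subset_right L (fun s hs => hs.1)
    -- the G-factor is the conical square function
    have claim_v : ∫⁻ q, v q ^ (2:ℝ) ∂ρ
        = ∫⁻ t in Ioi (0 : ℝ), ∫⁻ y in ball x t,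
            ((‖G (y, t)‖₊ : ℝ≥0∞)) ^ 2 / ENNReal.ofReal (t ^ (n + 1)) := by
      have hv2 : ∀ q : ℝ × E n, v q ^ (2:ℝ)
          = W2.indicator (fun q => (‖G (q.2, q.1)‖₊ : ℝ≥0∞) ^ 2
              / ENNReal.ofReal (q.1 ^ (n + 1))) q := by
        intro q
        by_cases hq : q ∈ W2
        · simp only [hv]
          rw [Set.indicator_of_mem hq, Set.indicator_of_mem hq,
            ENNReal.mul_rpow_of_nonneg _ _ (by norm_num : (0:ℝ) ≤ 2),
            sq_rpow, rpow_two', div_eq_mul_inv]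
        · simp only [hv]
          rw [Set.indicator_of_notMem hq, Set.indicator_of_notMem hq,
            ENNReal.zero_rpow_of_pos (by norm_num)]
      have hWg : Measurable (fun q : ℝ × E n => (‖G (q.2, q.1)‖₊ : ℝ≥0∞) ^ 2
          / ENNReal.ofReal (q.1 ^ (n + 1))) := by
        apply Measurable.div
        · exact ((hG.comp (measurable_snd.prodMk measurable_fst)).nnnorm.coe_nnreal_ennreal).pow_const 2
        · exact ENNReal.measurable_ofReal.comp (measurable_fst.pow_const (n+1))
      rw [lintegral_congr hv2, hρ, lintegral_prod _ (hWg.indicator hW2m).aemeasurable]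
      apply lintegral_congr
      intro t
      have hpt : ∀ y : E n, W2.indicator
          (fun q => (‖G (q.2, q.1)‖₊ : ℝ≥0∞) ^ 2 / ENNReal.ofReal (q.1 ^ (n + 1))) (t, y)
          = (ball x t).indicator
              (fun y => (‖G (y, t)‖₊ : ℝ≥0∞) ^ 2 / ENNReal.ofReal (t ^ (n + 1))) y := by
        intro y
        by_cases hy : dist x y < t
        · rw [Set.indicator_of_mem (show (t, y) ∈ W2 from hy),
            Set.indicator_of_mem (show y ∈ ball x t by rwa [Metric.mem_ball, dist_comm])]
        · rw [Set.indicator_of_notMem (show (t, y) ∉ W2 from hy),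
            Set.indicator_of_notMem (show y ∉ ball x t by rwa [Metric.mem_ball, dist_comm])]
      rw [lintegral_congr hpt, lintegral_indicator measurableSet_ball]
    calc (∫⁻ t in Ioi (0 : ℝ), ∫⁻ y : E n, P x y t)
        = ∫⁻ q, (u * v) q ∂ρ := htrip
      _ ≤ (∫⁻ q, u q ^ (2:ℝ) ∂ρ) ^ (1/2:ℝ) * (∫⁻ q, v q ^ (2:ℝ) ∂ρ) ^ (1/2:ℝ) := hCS
      _ ≤ L ^ (1/2:ℝ) * (∫⁻ t in Ioi (0 : ℝ), ∫⁻ y in ball x t,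
            ((‖G (y, t)‖₊ : ℝ≥0∞)) ^ 2 / ENNReal.ofReal (t ^ (n + 1))) ^ (1/2:ℝ) := by
          rw [claim_v]
          exact mul_le_mul_left (ENNReal.rpow_le_rpow claim_u (by norm_num)) _
  -- assemble everything
  have hconst : 2 * ωE⁻¹ * L ^ (1/2:ℝ)
      ≤ ENNReal.ofReal (2 * Real.sqrt (2 ^ (n + 1)) / ωE.toReal * Real.sqrt Cc) := by
    have e1 : L ^ (1/2:ℝ) = ENNReal.ofReal (Real.sqrt (2 ^ (n + 1)) * Real.sqrt Cc) := by
      rw [hLdef, ENNReal.ofReal_rpow_of_nonneg (by positivity) (by norm_num),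
        ← Real.sqrt_eq_rpow, Real.sqrt_mul (by positivity)]
    have e2 : ωE⁻¹ = ENNReal.ofReal (ωE.toReal)⁻¹ := by
      rw [ENNReal.ofReal_inv_of_pos hwr, ENNReal.ofReal_toReal hωtop]
    have e3 : (2 : ℝ≥0∞) = ENNReal.ofReal 2 := by simp
    rw [e1, e2, e3, ← ENNReal.ofReal_mul (by norm_num), ← ENNReal.ofReal_mul (by positivity)]
    apply ENNReal.ofReal_le_ofReal
    rw [div_eq_mul_inv]
    apply le_of_eq
    ring
  calc (∫⁻ t in Ioi (0 : ℝ), ∫⁻ y : E n,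
        (‖F (y, t)‖₊ : ℝ≥0∞) * (‖G (y, t)‖₊ : ℝ≥0∞) / ENNReal.ofReal t)
      ≤ 2 * ωE⁻¹ * ∫⁻ t in Ioi (0 : ℝ), ∫⁻ y : E n, ∫⁻ x : E n, P x y t := step1
    _ = 2 * ωE⁻¹ * ∫⁻ x : E n, ∫⁻ t in Ioi (0 : ℝ), ∫⁻ y : E n, P x y t := by
        rw [lintegral_congr (fun t => step2a t), step2b]
    _ ≤ 2 * ωE⁻¹ * ∫⁻ x : E n, L ^ (1/2:ℝ) * (∫⁻ t in Ioi (0 : ℝ), ∫⁻ y in ball x t,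
          ((‖G (y, t)‖₊ : ℝ≥0∞)) ^ 2 / ENNReal.ofReal (t ^ (n + 1))) ^ (1/2:ℝ) :=
        mul_le_mul_right (lintegral_mono step3) _
    _ = 2 * ωE⁻¹ * (L ^ (1/2:ℝ) * ∫⁻ x : E n, (∫⁻ t in Ioi (0 : ℝ), ∫⁻ y in ball x t,
          ((‖G (y, t)‖₊ : ℝ≥0∞)) ^ 2 / ENNReal.ofReal (t ^ (n + 1))) ^ (1/2:ℝ)) := by
        rw [lintegral_const_mul' _ _ hL12top]
    _ = (2 * ωE⁻¹ * L ^ (1/2:ℝ)) * ∫⁻ x : E n, (∫⁻ t in Ioi (0 : ℝ), ∫⁻ y in ball x t,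
          ((‖G (y, t)‖₊ : ℝ≥0∞)) ^ 2 / ENNReal.ofReal (t ^ (n + 1))) ^ (1/2:ℝ) := by
        ring
    _ ≤ ENNReal.ofReal (2 * Real.sqrt (2 ^ (n + 1)) / ωE.toReal * Real.sqrt Cc)
          * ∫⁻ x : E n, (∫⁻ t in Ioi (0 : ℝ), ∫⁻ y in ball x t,
          ((‖G (y, t)‖₊ : ℝ≥0∞)) ^ 2 / ENNReal.ofReal (t ^ (n + 1))) ^ (1/2:ℝ) :=
        mul_le_mul_left hconst _
end
end

section
/- Let F : ℝⁿ × (0,∞) → ℂ be measurable and β ≥ 1. Define N_*^β F(x) := sup_{(y,t): |x-y| < βt} |F(y,t)|. Then the distribution function satisfies |{x : N_*^β F(x) > λ}| ≤ C(n) βⁿ |{x : N_*^1 F(x) > λ}| for every λ > 0, and consequently ‖N_*^β F‖_{L²(ℝⁿ)} ≤ C(n)^{1/2} β^{n/2} ‖N_*^1 F‖_{L²(ℝⁿ)}. -/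
open MeasureTheory Metric Set ENNReal

/-- The nontangential maximal function of aperture `β`. -/
noncomputable def ntMax {n : ℕ} (β : ℝ) (F : EuclideanSpace ℝ (Fin n) × ℝ → ℂ)
    (x : EuclideanSpace ℝ (Fin n)) : ℝ≥0∞ :=
  ⨆ (y : EuclideanSpace ℝ (Fin n)) (t : ℝ) (_ : dist x y < β * t ∧ 0 < t),
    (‖F (y, t)‖₊ : ℝ≥0∞)

lemma ntMax_witness {n : ℕ} {β : ℝ} {F : EuclideanSpace ℝ (Fin n) × ℝ → ℂ}
    {x : EuclideanSpace ℝ (Fin n)} {c : ℝ≥0∞} (h : c < ntMax β F x) :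
    ∃ y t, (dist x y < β * t ∧ 0 < t) ∧ c < (‖F (y, t)‖₊ : ℝ≥0∞) := by
  rw [ntMax, lt_iSup_iff] at h
  obtain ⟨y, hy⟩ := h
  rw [lt_iSup_iff] at hy
  obtain ⟨t, ht⟩ := hy
  rw [lt_iSup_iff] at ht
  obtain ⟨hp, hv⟩ := ht
  exact ⟨y, t, hp, hv⟩

lemma le_ntMax {n : ℕ} {β : ℝ} {F : EuclideanSpace ℝ (Fin n) × ℝ → ℂ}
    {x y : EuclideanSpace ℝ (Fin n)} {t : ℝ} (h : dist x y < β * t ∧ 0 < t) :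
    (‖F (y, t)‖₊ : ℝ≥0∞) ≤ ntMax β F x :=
  le_iSup_of_le y <| le_iSup_of_le t <| le_iSup_of_le h le_rfl

lemma isOpen_ntMax_superlevel {n : ℕ} {β : ℝ} (F : EuclideanSpace ℝ (Fin n) × ℝ → ℂ)
    (c : ℝ≥0∞) : IsOpen {x : EuclideanSpace ℝ (Fin n) | c < ntMax β F x} := by
  rw [Metric.isOpen_iff]
  intro x hx
  obtain ⟨y, t, ⟨hd, ht⟩, hv⟩ := ntMax_witness hx
  refine ⟨β * t - dist x y, by linarith, fun x' hx' => ?_⟩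
  have hd' : dist x' y < β * t := by
    have := dist_triangle x' x y
    have h2 : dist x' x < β * t - dist x y := hx'
    linarith
  exact lt_of_lt_of_le hv (le_ntMax ⟨hd', ht⟩)

lemma ntMax_measurable {n : ℕ} {β : ℝ} (F : EuclideanSpace ℝ (Fin n) × ℝ → ℂ) :
    Measurable (ntMax β F) :=
  measurable_of_Ioi fun c => (isOpen_ntMax_superlevel F c).measurableSet

/-- The key covering estimate. -/
lemma covering_estimate {n : ℕ} (E₁ Eβ : Set (EuclideanSpace ℝ (Fin n))) {β : ℝ} (hβ : 1 ≤ β)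
    (H : ∀ x ∈ Eβ, ∃ y t, 0 < t ∧ dist x y < β * t ∧ ball y t ⊆ E₁) :
    volume Eβ ≤ ENNReal.ofReal (7 ^ n * β ^ n) * volume E₁ := by
  have hβ0 : (0:ℝ) < β := lt_of_lt_of_le one_pos hβ
  have hCpos : (0:ℝ) < 7 ^ n * β ^ n := by positivity
  -- trivial case: infinite measure
  rcases eq_or_ne (volume E₁) ⊤ with hE | hE
  · rw [hE, ENNReal.mul_top (ENNReal.ofReal_pos.mpr hCpos).ne']
    exact le_top
  -- dimension 0 case
  rcases Nat.eq_zero_or_pos n with hn | hn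
  · subst hn
    have hsub : Eβ ⊆ E₁ := by
      intro x hx
      obtain ⟨y, t, ht, _, hball⟩ := H x hx
      have : x = y := Subsingleton.elim x y
      exact hball (by simp [this, mem_ball, ht])
    calc volume Eβ ≤ volume E₁ := measure_mono hsub
      _ = ENNReal.ofReal (7 ^ 0 * β ^ 0) * volume E₁ := by norm_num
  -- main case
  have H' : ∀ x : EuclideanSpace ℝ (Fin n), ∃ y t,
      x ∈ Eβ → 0 < t ∧ dist x y < β * t ∧ ball y t ⊆ E₁ := by
    intro x
    by_cases hx : x ∈ Eβ
    · obtain ⟨y, t, h⟩ := H x hx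
      exact ⟨y, t, fun _ => h⟩
    · exact ⟨x, 1, fun h => absurd h hx⟩
  choose y t ht using H'
  set r : EuclideanSpace ℝ (Fin n) → ℝ := fun x => t x / 2 with hr
  set κ := volume (ball (0 : EuclideanSpace ℝ (Fin n)) 1) with hκ
  have κpos : 0 < κ := measure_ball_pos _ _ one_pos
  have κne : κ ≠ ⊤ := measure_ball_lt_top.ne
  have hvol : ∀ (c : EuclideanSpace ℝ (Fin n)) (s : ℝ), 0 ≤ s →
      volume (closedBall c s) = ENNReal.ofReal (s ^ n) * κ := by
    intro c s hs
    rw [hκ, Measure.addHaar_closedBall _ _ hs, finrank_euclideanSpace_fin]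
  have hsmall : ∀ x ∈ Eβ, closedBall (y x) (r x) ⊆ E₁ := by
    intro x hx
    refine (closedBall_subset_ball ?_).trans (ht x hx).2.2
    have := (ht x hx).1; simp only [hr]; linarith
  -- bound on radii
  have hRbound : ∀ x ∈ Eβ, r x ≤ max 1 ((volume E₁).toReal / κ.toReal) := by
    intro x hx
    by_contra hcon
    push_neg at hcon
    have h1 : (1:ℝ) < r x := lt_of_le_of_lt (le_max_left _ _) hcon
    have hle : volume (closedBall (y x) (r x)) ≤ volume E₁ := measure_mono (hsmall x hx)
    rw [hvol _ _ (by linarith)] at hle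
    have hrn : r x ≤ (r x) ^ n := le_self_pow₀ h1.le hn.ne'
    have hle2 : ENNReal.ofReal ((r x) ^ n) * κ ≤ volume E₁ := hle
    have hle3 : (r x) ^ n * κ.toReal ≤ (volume E₁).toReal := by
      have := ENNReal.toReal_mono hE hle2
      rwa [ENNReal.toReal_mul, ENNReal.toReal_ofReal (by positivity)] at this
    have hfin : (r x) ^ n ≤ (volume E₁).toReal / κ.toReal := by
      rw [le_div_iff₀ (ENNReal.toReal_pos κpos.ne' κne)]
      exact hle3
    have : r x ≤ max 1 ((volume E₁).toReal / κ.toReal) :=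
      le_max_of_le_right (hrn.trans hfin)
    exact absurd this (not_le.mpr hcon)
  -- Vitali
  obtain ⟨u, hu, hdisj, hcov⟩ := Vitali.exists_disjoint_subfamily_covering_enlargement
    (fun x => closedBall (y x) (r x)) Eβ r 2 one_lt_two
    (fun x hx => by have := (ht x hx).1; simp only [hr]; linarith)
    (max 1 ((volume E₁).toReal / κ.toReal)) hRbound
    (fun x hx => (nonempty_closedBall).2 (by have := (ht x hx).1; simp only [hr]; linarith))
  have hrpos : ∀ b ∈ u, 0 < r b := fun b hb => by
    have := (ht b (hu hb)).1; simp only [hr]; linarith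
  have hcount : u.Countable := by
    refine hdisj.countable_of_nonempty_interior fun b hb => ?_
    rw [interior_closedBall _ (hrpos b hb).ne']
    exact ⟨y b, mem_ball_self (hrpos b hb)⟩
  -- the enlarged balls cover Eβ
  have hEβsub : Eβ ⊆ ⋃ b ∈ u, closedBall (y b) (7 * β * r b) := by
    intro a ha
    obtain ⟨b, hbu, ⟨z, hza, hzb⟩, hrab⟩ := hcov a ha
    have hrb : 0 < r b := hrpos b hbu
    have h1 : dist a (y a) < β * t a := (ht a ha).2.1
    have h2 : dist (y a) z ≤ r a := by rw [dist_comm]; exact hza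
    have h3 : dist z (y b) ≤ r b := hzb
    have hta : t a = 2 * r a := by simp only [hr]; ring
    refine mem_biUnion hbu ?_
    have : dist a (y b) ≤ dist a (y a) + dist (y a) z + dist z (y b) := dist_triangle4 _ _ _ _
    have hra : 0 ≤ r a := by have := (ht a ha).1; simp only [hr]; linarith
    simp only [mem_closedBall]
    nlinarith [hrab, hβ]
  calc volume Eβ ≤ volume (⋃ b ∈ u, closedBall (y b) (7 * β * r b)) := measure_mono hEβsub
    _ ≤ ∑' b : u, volume (closedBall (y b) (7 * β * r b)) := measure_biUnion_le _ hcount _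
    _ = ∑' b : u, ENNReal.ofReal (7 ^ n * β ^ n) * volume (closedBall (y b) (r b)) := by
        refine tsum_congr fun b => ?_
        have hrb : 0 < r b.1 := hrpos b.1 b.2
        rw [hvol _ _ (by positivity), hvol _ _ hrb.le, ← mul_assoc]
        congr 1
        rw [← ENNReal.ofReal_mul (by positivity)]
        congr 1
        rw [mul_pow, mul_pow]
    _ = ENNReal.ofReal (7 ^ n * β ^ n) * ∑' b : u, volume (closedBall (y b) (r b)) :=
        ENNReal.tsum_mul_left
    _ ≤ ENNReal.ofReal (7 ^ n * β ^ n) * volume E₁ := by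
        refine mul_le_mul_right ?_ _
        rw [← measure_biUnion hcount hdisj (fun b _ => measurableSet_closedBall)]
        exact measure_mono (iUnion₂_subset fun b hb => hsmall b (hu hb))

/-- Distribution comparison implies comparison of second moments. -/
lemma lintegral_sq_le {α : Type*} [MeasurableSpace α] (μ : Measure α) (f g : α → ℝ≥0∞)
    (hf : Measurable f) (hg : Measurable g) (K : ℝ≥0∞) (hK0 : K ≠ 0) (hKt : K ≠ ⊤)
    (h : ∀ lam : ℝ, 0 < lam → μ {x | ENNReal.ofReal lam < f x} ≤ K * μ {x | ENNReal.ofReal lam < g x}) :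
    ∫⁻ x, f x ^ 2 ∂μ ≤ K * ∫⁻ x, g x ^ 2 ∂μ := by
  rcases eq_or_ne (∫⁻ x, g x ^ 2 ∂μ) ⊤ with hI | hI
  · rw [hI, ENNReal.mul_top hK0]; exact le_top
  have hg2 : Measurable fun x => g x ^ 2 := hg.pow_const 2
  -- `f` is a.e. finite
  have hftop : μ {x | f x = ⊤} = 0 := by
    by_contra hne
    have key : ∀ lam : ℝ, 0 < lam → μ {x | f x = ⊤} * ENNReal.ofReal lam ^ 2
        ≤ K * ∫⁻ x, g x ^ 2 ∂μ := by
      intro lam hlam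
      have h1 : μ {x | f x = ⊤} ≤ μ {x | ENNReal.ofReal lam < f x} :=
        measure_mono fun x hx => by
          simp only [mem_setOf_eq] at *
          rw [hx]; exact ENNReal.ofReal_lt_top
      have h2 : {x | ENNReal.ofReal lam < g x} ⊆ {x | ENNReal.ofReal lam ^ 2 ≤ g x ^ 2} := by
        intro x hx
        have hx' : ENNReal.ofReal lam < g x := hx
        show ENNReal.ofReal lam ^ 2 ≤ g x ^ 2
        exact pow_le_pow_left' hx'.le 2
      calc μ {x | f x = ⊤} * ENNReal.ofReal lam ^ 2
          ≤ (K * μ {x | ENNReal.ofReal lam < g x}) * ENNReal.ofReal lam ^ 2 :=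
            mul_le_mul_left (h1.trans (h lam hlam)) _
        _ = K * (ENNReal.ofReal lam ^ 2 * μ {x | ENNReal.ofReal lam < g x}) := by ring
        _ ≤ K * (ENNReal.ofReal lam ^ 2 * μ {x | ENNReal.ofReal lam ^ 2 ≤ g x ^ 2}) :=
            mul_le_mul_right (mul_le_mul_right (measure_mono h2) _) _
        _ ≤ K * ∫⁻ x, g x ^ 2 ∂μ :=
            mul_le_mul_right (mul_meas_ge_le_lintegral₀ hg2.aemeasurable _) _
    set B := K * ∫⁻ x, g x ^ 2 ∂μ with hB
    have hBt : B ≠ ⊤ := ENNReal.mul_ne_top hKt hI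
    have hdiv : B / μ {x | f x = ⊤} ≠ ⊤ := (ENNReal.div_lt_top hBt hne).ne
    set lam := (B / μ {x | f x = ⊤}).toReal + 1 with hlamdef
    have hlam1 : 1 ≤ lam := le_add_of_nonneg_left ENNReal.toReal_nonneg
    have hlampos : 0 < lam := lt_of_lt_of_le one_pos hlam1
    have hlt : B / μ {x | f x = ⊤} < ENNReal.ofReal lam := by
      rw [ENNReal.lt_ofReal_iff_toReal_lt hdiv]
      simp only [hlamdef]; linarith
    have h3 : ENNReal.ofReal lam ≤ ENNReal.ofReal lam ^ 2 :=
      le_self_pow₀ (ENNReal.one_le_ofReal.mpr hlam1) two_ne_zero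
    have h4 : ENNReal.ofReal lam ^ 2 ≤ B / μ {x | f x = ⊤} := by
      rw [ENNReal.le_div_iff_mul_le (Or.inl hne) (Or.inr hBt), mul_comm]
      exact key lam hlampos
    exact absurd h4 (not_le.mpr (lt_of_lt_of_le hlt h3))
  have hfae : ∀ᵐ x ∂μ, f x ≠ ⊤ := by
    rw [ae_iff]
    simpa only [not_not] using hftop
  have hgae : ∀ᵐ x ∂μ, g x ≠ ⊤ := by
    filter_upwards [ae_lt_top hg2 hI] with x hx
    intro htop
    rw [htop, ENNReal.top_pow two_ne_zero] at hx
    exact lt_irrefl _ hx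
  set f' : α → ℝ := fun x => (f x).toReal with hf'
  set g' : α → ℝ := fun x => (g x).toReal with hg'
  have hconv : ∀ (F : α → ℝ≥0∞) (x : α), F x ≠ ⊤ →
      F x ^ 2 = ENNReal.ofReal ((F x).toReal ^ (2:ℝ)) := by
    intro F x hx
    rw [show (2:ℝ) = ((2:ℕ):ℝ) by norm_num, Real.rpow_natCast,
      ENNReal.ofReal_pow ENNReal.toReal_nonneg, ENNReal.ofReal_toReal hx]
  have lhs_eq : ∫⁻ x, f x ^ 2 ∂μ = ∫⁻ x, ENNReal.ofReal (f' x ^ (2:ℝ)) ∂μ :=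
    lintegral_congr_ae <| by filter_upwards [hfae] with x hx using hconv f x hx
  have rhs_eq : ∫⁻ x, g x ^ 2 ∂μ = ∫⁻ x, ENNReal.ofReal (g' x ^ (2:ℝ)) ∂μ :=
    lintegral_congr_ae <| by filter_upwards [hgae] with x hx using hconv g x hx
  rw [lhs_eq, rhs_eq,
    lintegral_rpow_eq_lintegral_meas_lt_mul μ
      (Filter.Eventually.of_forall fun x => ENNReal.toReal_nonneg)
      hf.ennreal_toReal.aemeasurable two_pos,
    lintegral_rpow_eq_lintegral_meas_lt_mul μ
      (Filter.Eventually.of_forall fun x => ENNReal.toReal_nonneg)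
      hg.ennreal_toReal.aemeasurable two_pos,
    ← mul_assoc, mul_comm K (ENNReal.ofReal 2), mul_assoc]
  refine mul_le_mul_right ?_ _
  rw [← lintegral_const_mul' K _ hKt]
  refine lintegral_mono_ae ?_
  filter_upwards [self_mem_ae_restrict (measurableSet_Ioi : MeasurableSet (Ioi (0:ℝ)))]
    with t ht
  have ht0 : (0:ℝ) < t := ht
  have e1 : μ {a | t < f' a} = μ {a | ENNReal.ofReal t < f a} := by
    apply measure_congr
    rw [Filter.eventuallyEq_set]
    filter_upwards [hfae] with a ha
    exact (ENNReal.ofReal_lt_iff_lt_toReal ht0.le ha).symm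
  have e2 : μ {a | t < g' a} = μ {a | ENNReal.ofReal t < g a} := by
    apply measure_congr
    rw [Filter.eventuallyEq_set]
    filter_upwards [hgae] with a ha
    exact (ENNReal.ofReal_lt_iff_lt_toReal ht0.le ha).symm
  rw [e1, e2, ← mul_assoc]
  exact mul_le_mul_left (h t ht0) _

/-- Fefferman–Stein aperture change: the distribution function of `N_*^β F` is controlled by
`C(n) βⁿ` times that of `N_*^1 F`, and consequently
`‖N_*^β F‖_{L²} ≤ C(n)^{1/2} β^{n/2} ‖N_*^1 F‖_{L²}`. -/
theorem aperture_change
    (n : ℕ) :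
    ∃ C > 0, ∀ (F : EuclideanSpace ℝ (Fin n) × ℝ → ℂ) (β : ℝ), 1 ≤ β →
      (∀ lam : ℝ, 0 < lam →
        volume {x : EuclideanSpace ℝ (Fin n) | ENNReal.ofReal lam < ntMax β F x}
          ≤ ENNReal.ofReal (C * β ^ n) *
            volume {x : EuclideanSpace ℝ (Fin n) | ENNReal.ofReal lam < ntMax 1 F x}) ∧
      (∫⁻ x, (ntMax β F x) ^ 2) ^ (1/2 : ℝ)
        ≤ ENNReal.ofReal (Real.sqrt C * β ^ ((n : ℝ) / 2)) *
          (∫⁻ x, (ntMax 1 F x) ^ 2) ^ (1/2 : ℝ) := by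
  refine ⟨7 ^ n, by positivity, fun F β hβ => ?_⟩
  have hβ0 : (0:ℝ) < β := lt_of_lt_of_le one_pos hβ
  have hCpos : (0:ℝ) < 7 ^ n * β ^ n := by positivity
  have hdist : ∀ lam : ℝ, 0 < lam →
      volume {x : EuclideanSpace ℝ (Fin n) | ENNReal.ofReal lam < ntMax β F x}
        ≤ ENNReal.ofReal ((7:ℝ) ^ n * β ^ n) *
          volume {x : EuclideanSpace ℝ (Fin n) | ENNReal.ofReal lam < ntMax 1 F x} := by
    intro lam _
    refine covering_estimate _ _ hβ ?_
    intro x hx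
    obtain ⟨y, t, ⟨hd, ht⟩, hv⟩ := ntMax_witness hx
    refine ⟨y, t, ht, hd, fun z hz => ?_⟩
    have hz' : dist z y < 1 * t := by rw [one_mul]; exact hz
    exact lt_of_lt_of_le hv (le_ntMax ⟨hz', ht⟩)
  refine ⟨hdist, ?_⟩
  have key := lintegral_sq_le volume (ntMax β F) (ntMax 1 F) (ntMax_measurable F)
    (ntMax_measurable F) (ENNReal.ofReal (7 ^ n * β ^ n))
    (ENNReal.ofReal_pos.mpr hCpos).ne' ENNReal.ofReal_ne_top hdist
  calc (∫⁻ x, (ntMax β F x) ^ 2) ^ (1/2 : ℝ)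
      ≤ (ENNReal.ofReal (7 ^ n * β ^ n) * ∫⁻ x, (ntMax 1 F x) ^ 2) ^ (1/2 : ℝ) :=
        ENNReal.rpow_le_rpow key (by norm_num)
    _ = ENNReal.ofReal (Real.sqrt (7 ^ n) * β ^ ((n : ℝ) / 2)) *
          (∫⁻ x, (ntMax 1 F x) ^ 2) ^ (1/2 : ℝ) := by
        rw [ENNReal.mul_rpow_of_nonneg _ _ (by norm_num : (0:ℝ) ≤ 1/2)]
        congr 1
        rw [ENNReal.ofReal_rpow_of_pos hCpos]
        congr 1
        rw [Real.mul_rpow (by positivity) (by positivity), Real.sqrt_eq_rpow]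
        congr 1
        rw [← Real.rpow_natCast β n, ← Real.rpow_mul hβ0.le]
        congr 1
        ring
end
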